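/- Let w, w' ∈ S_n. Then w' ≤ w in the Bruhat order if and only if for every 1 ≤ k ≤ n and 1 ≤ l ≤ n one has w'[k,l] ≤ w[k,l], where w[k,l] := #{a : 1 ≤ a ≤ k and w(a) ≥ l}. -/

import Mathlib

/-- The length of a permutation: its number of inversions. -/
def invLen {n : ℕ} (w : Equiv.Perm (Fin n)) : ℕ :=
  (Finset.univ.filter (fun p : Fin n × Fin n => p.1 < p.2 ∧ w p.2 < w p.1)).card

/-- One step of the Bruhat order: `w'` is obtained from `w` by multiplication by a
transposition which decreases the length. -/
def BruhatStep {n : ℕ} (w w' : Equiv.Perm (Fin n)) : Prop :=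
  ∃ i j : Fin n, i ≠ j ∧ w' = w * Equiv.swap i j ∧ invLen w' < invLen w

/-- Bruhat order: `w' ≤_B w` iff `w'` is obtained from `w` by a sequence of
multiplications by transpositions, each decreasing the length. -/
def BruhatLE {n : ℕ} (w' w : Equiv.Perm (Fin n)) : Prop :=
  Relation.ReflTransGen BruhatStep w w'

/-- `w[k,l] = #{a : 1 ≤ a ≤ k, w(a) ≥ l}` (here positions and values of
`w : Perm (Fin n)` are shifted to `1,...,n` by adding one). -/
def bcount {n : ℕ} (w : Equiv.Perm (Fin n)) (k l : ℕ) : ℕ :=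
  (Finset.univ.filter (fun a : Fin n => (a : ℕ) + 1 ≤ k ∧ l ≤ (w a : ℕ) + 1)).card

namespace BruhatAux

open Finset

variable {n : ℕ}

/-- The counting statistic, 0-indexed. -/
def D (x : Equiv.Perm (Fin n)) (k l : ℕ) : ℕ :=
  (Finset.univ.filter (fun a : Fin n => (a : ℕ) < k ∧ l ≤ ((x a : Fin n) : ℕ))).card

lemma mul_swap_apply (w : Equiv.Perm (Fin n)) (i j a : Fin n) :
    (w * Equiv.swap i j) a = if a = i then w j else if a = j then w i else w a := by
  simp only [Equiv.Perm.mul_apply, Equiv.swap_apply_def]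
  split_ifs <;> rfl

/-- Key length lemma: swapping positions `i<j` with `w j < w i` strictly decreases invLen. -/
lemma invLen_mul_swap_lt (w : Equiv.Perm (Fin n)) (i j : Fin n) (hij : i < j)
    (hw : w j < w i) : invLen (w * Equiv.swap i j) < invLen w := by
  classical
  set s := Equiv.swap i j with hs
  set Iw : Finset (Fin n × Fin n) :=
    Finset.univ.filter (fun p : Fin n × Fin n => p.1 < p.2 ∧ w p.2 < w p.1) with hIw
  set Iv : Finset (Fin n × Fin n) :=
    Finset.univ.filter (fun p : Fin n × Fin n => p.1 < p.2 ∧ (w * s) p.2 < (w * s) p.1) with hIv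
  have hmemIw : ∀ p : Fin n × Fin n, p ∈ Iw ↔ p.1 < p.2 ∧ w p.2 < w p.1 := by
    intro p; simp [hIw]
  have hmemIv : ∀ p : Fin n × Fin n, p ∈ Iv ↔ p.1 < p.2 ∧ w (s p.2) < w (s p.1) := by
    intro p; rw [hIv, Finset.mem_filter]; simp [Equiv.Perm.mul_apply]
  have hijIw : (i, j) ∈ Iw := by rw [hmemIw]; exact ⟨hij, hw⟩
  -- the injection
  set f : Fin n × Fin n → Fin n × Fin n := fun p => if s p.1 < s p.2 then (s p.1, s p.2) else p
    with hf
  have hmaps : ∀ p ∈ Iv, f p ∈ Iw.erase (i, j) := by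
    rintro ⟨a, b⟩ hp
    rw [hmemIv] at hp
    obtain ⟨hab, hvw⟩ := hp
    rw [Finset.mem_erase, hmemIw]
    by_cases hfl : s a < s b
    · have : f (a, b) = (s a, s b) := by simp [hf, hfl]
      rw [this]
      refine ⟨?_, hfl, hvw⟩
      intro h
      have h1 : s a = i := by exact congrArg Prod.fst h
      have h2 : s b = j := by exact congrArg Prod.snd h
      have : a = s i := by rw [← h1]; simp [hs]
      have ha : a = j := by rw [this, hs, Equiv.swap_apply_left]
      have : b = s j := by rw [← h2]; simp [hs]
      have hb : b = i := by rw [this, hs, Equiv.swap_apply_right]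
      rw [ha, hb] at hab
      exact absurd hab (asymm hij)
    · have hfp : f (a, b) = (a, b) := by simp [hf, hfl]
      rw [hfp]
      -- flipped pair analysis
      have hsba : s b < s a := by
        rcases lt_trichotomy (s a) (s b) with h | h | h
        · exact absurd h hfl
        · exact absurd (s.injective h) (ne_of_lt hab)
        · exact h
      by_cases hai : a = i
      · by_cases hbj : b = j
        · subst hai; subst hbj
          rw [hs, Equiv.swap_apply_left, Equiv.swap_apply_right] at hvw
          exact absurd hvw (asymm hw)
        · have hbi : b ≠ i := (ne_of_gt (hai ▸ hab))
          have hsb : s b = b := by rw [hs]; exact Equiv.swap_apply_of_ne_of_ne hbi hbj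
          subst hai
          rw [hs, Equiv.swap_apply_left] at hvw hsba
          rw [hsb] at hvw hsba
          refine ⟨?_, hab, ?_⟩
          · intro h; exact hbj (congrArg Prod.snd h)
          · exact lt_trans hvw hw
      · by_cases hbj : b = j
        · have haj : a ≠ j := (ne_of_lt (hbj ▸ hab))
          have hsa : s a = a := by rw [hs]; exact Equiv.swap_apply_of_ne_of_ne hai haj
          subst hbj
          rw [hs, Equiv.swap_apply_right] at hvw hsba
          rw [hsa] at hvw hsba
          refine ⟨?_, hab, ?_⟩
          · intro h; exact hai (congrArg Prod.fst h)
          · exact lt_trans hw hvw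
        · -- neither a=i nor b=j: show not flipped, contradiction
          exfalso
          by_cases haj : a = j
          · have hbi : b ≠ i := fun h => (absurd (h ▸ haj ▸ hab) (asymm hij))
            have hsb : s b = b := by rw [hs]; exact Equiv.swap_apply_of_ne_of_ne hbi hbj
            subst haj
            rw [hs, Equiv.swap_apply_right, hsb] at hsba
            exact absurd (lt_trans hsba hij) (asymm hab)
          · by_cases hbi : b = i
            · have hsa : s a = a := by rw [hs]; exact Equiv.swap_apply_of_ne_of_ne hai haj
              subst hbi
              rw [hs, Equiv.swap_apply_left, hsa] at hsba
              exact absurd (lt_trans hij hsba) (asymm hab)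
            · have hsa : s a = a := by rw [hs]; exact Equiv.swap_apply_of_ne_of_ne hai haj
              have hsb : s b = b := by rw [hs]; exact Equiv.swap_apply_of_ne_of_ne hbi hbj
              rw [hsa, hsb] at hsba
              exact absurd hab (asymm hsba)
  have hinj : Set.InjOn f ↑Iv := by
    rintro ⟨a, b⟩ ha ⟨c, d⟩ hc hfe
    have hab : a < b := ((hmemIv (a, b)).1 ha).1
    have hcd : c < d := ((hmemIv (c, d)).1 hc).1
    by_cases h1 : s a < s b <;> by_cases h2 : s c < s d
    · simp only [hf, if_pos h1, if_pos h2, Prod.mk.injEq] at hfe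
      have := s.injective hfe.1
      have := s.injective hfe.2
      simp_all
    · simp only [hf, if_pos h1, if_neg h2, Prod.mk.injEq] at hfe
      -- (s a, s b) = (c, d), but then c < d means s a < s b means... need contradiction
      exfalso
      have hsc : s c = a := by rw [← hfe.1]; simp [hs]
      have hsd : s d = b := by rw [← hfe.2]; simp [hs]
      have : s c < s d := hsc ▸ hsd ▸ hab
      exact h2 this
    · simp only [hf, if_neg h1, if_pos h2, Prod.mk.injEq] at hfe
      exfalso
      have hsa : s a = c := by rw [hfe.1, hs, Equiv.swap_apply_self]
      have hsb : s b = d := by rw [hfe.2, hs, Equiv.swap_apply_self]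
      have : s a < s b := by rw [hsa, hsb]; exact hcd
      exact h1 this
    · simp only [hf, if_neg h1, if_neg h2] at hfe
      exact hfe
  calc invLen (w * s) = Iv.card := rfl
    _ ≤ (Iw.erase (i, j)).card := Finset.card_le_card_of_injOn f hmaps hinj
    _ < Iw.card := Finset.card_erase_lt_of_mem hijIw

/-- Converse: if the swap decreases length then the values were inverted. -/
lemma swap_values_of_invLen_lt (w : Equiv.Perm (Fin n)) (i j : Fin n) (hij : i < j)
    (hlen : invLen (w * Equiv.swap i j) < invLen w) : w j < w i := by
  rcases lt_trichotomy (w j) (w i) with h | h | h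
  · exact h
  · exact absurd (w.injective h) (ne_of_gt hij)
  · exfalso
    set v := w * Equiv.swap i j with hv
    have hvi : v i = w j := by rw [hv, mul_swap_apply, if_pos rfl]
    have hvj : v j = w i := by
      rw [hv, mul_swap_apply, if_neg (ne_of_gt hij), if_pos rfl]
    have h1 : v j < v i := by rw [hvi, hvj]; exact h
    have h2 : invLen (v * Equiv.swap i j) < invLen v := invLen_mul_swap_lt v i j hij h1
    have h3 : v * Equiv.swap i j = w := by
      rw [hv, mul_assoc, Equiv.swap_mul_self, mul_one]
    rw [h3] at h2
    exact absurd hlen (asymm h2)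

lemma D_low (w : Equiv.Perm (Fin n)) (i j : Fin n) (hij : i < j) (k l : ℕ)
    (hk : k ≤ (i : ℕ)) : D (w * Equiv.swap i j) k l = D w k l := by
  unfold D
  congr 1
  apply Finset.filter_congr
  intro a _
  by_cases h : (a : ℕ) < k
  · have hai : a ≠ i := by intro h'; subst h'; omega
    have haj : a ≠ j := by
      intro h'; subst h'
      have := Fin.lt_def.1 hij; omega
    rw [mul_swap_apply, if_neg hai, if_neg haj]
  · simp [h]

lemma D_high (w : Equiv.Perm (Fin n)) (i j : Fin n) (hij : i < j) (k l : ℕ)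
    (hk : (j : ℕ) < k) : D (w * Equiv.swap i j) k l = D w k l := by
  have hik : (i : ℕ) < k := lt_trans (Fin.lt_def.1 hij) hk
  unfold D
  apply Finset.card_bij (fun a _ => Equiv.swap i j a)
  · intro a ha
    simp only [Finset.mem_filter, Finset.mem_univ, true_and] at ha ⊢
    rcases ha with ⟨hak, hl⟩
    constructor
    · rw [Equiv.swap_apply_def]
      split_ifs <;> omega
    · rw [Equiv.Perm.mul_apply] at hl; exact hl
  · intro a _ b _ h
    exact (Equiv.swap i j).injective h
  · intro b hb
    simp only [Finset.mem_filter, Finset.mem_univ, true_and] at hb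
    refine ⟨Equiv.swap i j b, ?_, by rw [Equiv.swap_apply_self]⟩
    simp only [Finset.mem_filter, Finset.mem_univ, true_and]
    constructor
    · rw [Equiv.swap_apply_def]
      split_ifs <;> omega
    · rw [Equiv.Perm.mul_apply, Equiv.swap_apply_self]
      exact hb.2

lemma D_mid_eq (w : Equiv.Perm (Fin n)) (i j : Fin n) (hij : i < j)
    (hw : ((w j : Fin n) : ℕ) < ((w i : Fin n) : ℕ)) (k l : ℕ)
    (hk1 : (i : ℕ) < k) (hk2 : k ≤ (j : ℕ))
    (hl : l ≤ ((w j : Fin n) : ℕ) ∨ ((w i : Fin n) : ℕ) < l) :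
    D (w * Equiv.swap i j) k l = D w k l := by
  unfold D
  congr 1
  apply Finset.filter_congr
  intro a _
  by_cases h : (a : ℕ) < k
  · have haj : a ≠ j := by intro h'; subst h'; omega
    by_cases hai : a = i
    · subst hai
      rw [mul_swap_apply, if_pos rfl]
      rcases hl with hl | hl
      · simp only [h, true_and]
        constructor <;> intro <;> omega
      · simp only [h, true_and]
        constructor <;> intro <;> omega
    · rw [mul_swap_apply, if_neg hai, if_neg haj]
  · simp [h]

lemma D_mid_lt (w : Equiv.Perm (Fin n)) (i j : Fin n) (hij : i < j) (k l : ℕ)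
    (hk1 : (i : ℕ) < k) (hk2 : k ≤ (j : ℕ))
    (hl1 : ((w j : Fin n) : ℕ) < l) (hl2 : l ≤ ((w i : Fin n) : ℕ)) :
    D (w * Equiv.swap i j) k l + 1 = D w k l := by
  classical
  unfold D
  set Fv := Finset.univ.filter
    (fun a : Fin n => (a : ℕ) < k ∧ l ≤ (((w * Equiv.swap i j) a : Fin n) : ℕ)) with hFv
  set Fw := Finset.univ.filter
    (fun a : Fin n => (a : ℕ) < k ∧ l ≤ ((w a : Fin n) : ℕ)) with hFw
  have hiFv : i ∉ Fv := by
    simp only [hFv, Finset.mem_filter, Finset.mem_univ, true_and, not_and]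
    intro _
    rw [mul_swap_apply, if_pos rfl]
    omega
  have hins : insert i Fv = Fw := by
    ext a
    simp only [Finset.mem_insert, hFv, hFw, Finset.mem_filter, Finset.mem_univ, true_and]
    by_cases hai : a = i
    · subst hai
      simp only [true_or, true_iff]
      exact ⟨hk1, hl2⟩
    · simp only [hai, false_or]
      by_cases haj : a = j
      · subst haj
        constructor <;> (intro h; omega)
      · rw [mul_swap_apply, if_neg hai, if_neg haj]
  rw [← hins, Finset.card_insert_of_notMem hiFv]

/-- One Bruhat step decreases all the `D` statistics. -/
lemma D_step {w v : Equiv.Perm (Fin n)} (h : BruhatStep w v) (k l : ℕ) :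
    D v k l ≤ D w k l := by
  obtain ⟨i, j, hne, hv, hlen⟩ := h
  obtain ⟨i', j', hlt, hv'⟩ : ∃ i' j' : Fin n, i' < j' ∧ v = w * Equiv.swap i' j' := by
    rcases hne.lt_or_gt with h | h
    · exact ⟨i, j, h, hv⟩
    · exact ⟨j, i, h, by rwa [Equiv.swap_comm]⟩
  clear hv hne
  subst hv'
  have hwv : w j' < w i' := swap_values_of_invLen_lt w i' j' hlt hlen
  have hwv' : ((w j' : Fin n) : ℕ) < ((w i' : Fin n) : ℕ) := Fin.lt_def.1 hwv
  rcases le_or_gt k (i' : ℕ) with hk | hk1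
  · exact le_of_eq (D_low w i' j' hlt k l hk)
  rcases le_or_gt k (j' : ℕ) with hk2 | hk2
  · rcases le_or_gt l ((w j' : Fin n) : ℕ) with hl | hl1
    · exact le_of_eq (D_mid_eq w i' j' hlt hwv' k l hk1 hk2 (Or.inl hl))
    rcases le_or_gt l ((w i' : Fin n) : ℕ) with hl2 | hl2
    · have := D_mid_lt w i' j' hlt k l hk1 hk2 hl1 hl2
      omega
    · exact le_of_eq (D_mid_eq w i' j' hlt hwv' k l hk1 hk2 (Or.inr hl2))
  · exact le_of_eq (D_high w i' j' hlt k l hk2)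

lemma D_le_of_BruhatLE {w u : Equiv.Perm (Fin n)} (h : BruhatLE u w) (k l : ℕ) :
    D u k l ≤ D w k l := by
  unfold BruhatLE at h
  induction h with
  | refl => exact le_refl _
  | tail _ hstep ih => exact le_trans (D_step hstep k l) ih

/-- At the first index where `u` and `w` differ, `w` is larger. -/
lemma first_diff (u w : Equiv.Perm (Fin n)) (i : Fin n)
    (hagree : ∀ a, a < i → u a = w a) (hne : u i ≠ w i)
    (hyp : ∀ k l, D u k l ≤ D w k l) : ((u i : Fin n) : ℕ) < ((w i : Fin n) : ℕ) := by
  classical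
  by_contra hcon
  have hval : ((u i : Fin n) : ℕ) ≠ ((w i : Fin n) : ℕ) := fun h => hne (Fin.val_injective h)
  have hwi : ((w i : Fin n) : ℕ) < ((u i : Fin n) : ℕ) := by omega
  set k := (i : ℕ) + 1
  set l := ((u i : Fin n) : ℕ)
  set Fu := Finset.univ.filter (fun a : Fin n => (a : ℕ) < k ∧ l ≤ ((u a : Fin n) : ℕ)) with hFu
  set Fw := Finset.univ.filter (fun a : Fin n => (a : ℕ) < k ∧ l ≤ ((w a : Fin n) : ℕ)) with hFw
  have hiFu : i ∈ Fu := by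
    simp only [hFu, Finset.mem_filter, Finset.mem_univ, true_and]
    exact ⟨by omega, le_refl _⟩
  have hsub : Fw ⊆ Fu.erase i := by
    intro a ha
    simp only [hFw, Finset.mem_filter, Finset.mem_univ, true_and] at ha
    have hai : a ≠ i := by
      intro h; subst h; omega
    have hav : (a : ℕ) < (i : ℕ) := by
      have : (a : ℕ) ≠ (i : ℕ) := fun h => hai (Fin.val_injective h)
      omega
    rw [Finset.mem_erase]
    refine ⟨hai, ?_⟩
    simp only [hFu, Finset.mem_filter, Finset.mem_univ, true_and]
    rw [hagree a (Fin.lt_def.2 hav)]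
    exact ha
  have h1 : D u k l ≤ D w k l := hyp k l
  have h2 : Fw.card ≤ (Fu.erase i).card := Finset.card_le_card hsub
  have h3 : (Fu.erase i).card = Fu.card - 1 := Finset.card_erase_of_mem hiFu
  have h4 : 1 ≤ Fu.card := Finset.card_pos.2 ⟨i, hiFu⟩
  have h5 : D u k l = Fu.card := rfl
  have h6 : D w k l = Fw.card := rfl
  omega

def Cpart (x : Equiv.Perm (Fin n)) (k i m : ℕ) : ℕ :=
  (Finset.univ.filter (fun a : Fin n =>
    ((a : ℕ) < k ∧ m ≤ ((x a : Fin n) : ℕ)) ∧ (a : ℕ) < i)).card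

def Epart (x : Equiv.Perm (Fin n)) (k i m : ℕ) : ℕ :=
  (Finset.univ.filter (fun a : Fin n =>
    ((a : ℕ) < k ∧ m ≤ ((x a : Fin n) : ℕ)) ∧ ¬((a : ℕ) < i))).card

lemma D_split (x : Equiv.Perm (Fin n)) (k i m : ℕ) :
    Cpart x k i m + Epart x k i m = D x k m := by
  have h := Finset.card_filter_add_card_filter_not
    (p := fun a : Fin n => (a : ℕ) < i)
    (s := Finset.univ.filter (fun a : Fin n => (a : ℕ) < k ∧ m ≤ ((x a : Fin n) : ℕ)))
  rw [Finset.filter_filter, Finset.filter_filter] at h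
  exact h

/-- The key strict inequality in the region affected by the swap. -/
lemma strict_claim (u w : Equiv.Perm (Fin n)) (i j : Fin n)
    (hagree : ∀ a, a < i → u a = w a)
    (hij : i < j)
    (huiwj : ((u i : Fin n) : ℕ) ≤ ((w j : Fin n) : ℕ))
    (hwi : ((u i : Fin n) : ℕ) < ((w i : Fin n) : ℕ))
    (hmin : ∀ a, i < a → a < j →
      ¬(((u i : Fin n) : ℕ) ≤ ((w a : Fin n) : ℕ) ∧ ((w a : Fin n) : ℕ) < ((w i : Fin n) : ℕ)))
    (hyp : ∀ k l, D u k l ≤ D w k l)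
    (k l : ℕ) (hk1 : (i : ℕ) < k) (hk2 : k ≤ (j : ℕ))
    (hl1 : ((w j : Fin n) : ℕ) < l) (hl2 : l ≤ ((w i : Fin n) : ℕ)) :
    D u k l < D w k l := by
  classical
  set l₀ := ((u i : Fin n) : ℕ) with hl₀
  have hCeq : ∀ m, Cpart u k (i : ℕ) m = Cpart w k (i : ℕ) m := by
    intro m
    unfold Cpart
    refine congrArg Finset.card (Finset.filter_congr ?_)
    intro a _
    by_cases h : (a : ℕ) < (i : ℕ)
    · rw [hagree a (Fin.lt_def.2 h)]
    · simp [h]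
  -- (1)
  have h1 : Epart u k (i : ℕ) l + 1 ≤ Epart u k (i : ℕ) l₀ := by
    unfold Epart
    set S := Finset.univ.filter (fun a : Fin n =>
      ((a : ℕ) < k ∧ l ≤ ((u a : Fin n) : ℕ)) ∧ ¬((a : ℕ) < (i : ℕ))) with hS
    have hiS : i ∉ S := by
      simp only [hS, Finset.mem_filter, Finset.mem_univ, true_and, not_and]
      intro h _
      omega
    have hsub : insert i S ⊆ Finset.univ.filter (fun a : Fin n =>
        ((a : ℕ) < k ∧ l₀ ≤ ((u a : Fin n) : ℕ)) ∧ ¬((a : ℕ) < (i : ℕ))) := by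
      intro a ha
      rcases Finset.mem_insert.1 ha with rfl | ha
      · simp only [Finset.mem_filter, Finset.mem_univ, true_and]
        exact ⟨⟨hk1, le_refl _⟩, by omega⟩
      · simp only [hS, Finset.mem_filter, Finset.mem_univ, true_and] at ha
        simp only [Finset.mem_filter, Finset.mem_univ, true_and]
        exact ⟨⟨ha.1.1, by omega⟩, ha.2⟩
    calc S.card + 1 = (insert i S).card := (Finset.card_insert_of_notMem hiS).symm
      _ ≤ _ := Finset.card_le_card hsub
  -- (2)
  have h2 : Epart u k (i : ℕ) l₀ ≤ Epart w k (i : ℕ) l₀ := by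
    have hh := hyp k l₀
    have hu := D_split u k (i : ℕ) l₀
    have hw := D_split w k (i : ℕ) l₀
    have hc := hCeq l₀
    omega
  -- (3)
  have h3 : Epart w k (i : ℕ) l₀ = Epart w k (i : ℕ) l := by
    unfold Epart
    refine congrArg Finset.card (Finset.filter_congr ?_)
    intro a _
    by_cases hcond : (a : ℕ) < k ∧ ¬((a : ℕ) < (i : ℕ))
    · obtain ⟨hak, hai⟩ := hcond
      have key : l₀ ≤ ((w a : Fin n) : ℕ) ↔ l ≤ ((w a : Fin n) : ℕ) := by
        constructor
        · intro h
          by_cases hia : a = i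
          · subst hia; omega
          · have hia' : i < a := by
              have : (i : ℕ) ≠ (a : ℕ) := fun hh => hia (Fin.val_injective hh.symm)
              exact Fin.lt_def.2 (by omega)
            have haj : a < j := Fin.lt_def.2 (by omega)
            have := hmin a hia' haj
            omega
        · intro h; omega
      constructor
      · rintro ⟨⟨h1', h2'⟩, h3'⟩; exact ⟨⟨h1', key.1 h2'⟩, h3'⟩
      · rintro ⟨⟨h1', h2'⟩, h3'⟩; exact ⟨⟨h1', key.2 h2'⟩, h3'⟩
    · constructor
      · rintro ⟨⟨ha1, _⟩, ha2⟩; exact absurd ⟨ha1, ha2⟩ hcond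
      · rintro ⟨⟨ha1, _⟩, ha2⟩; exact absurd ⟨ha1, ha2⟩ hcond
  have hu := D_split u k (i : ℕ) l
  have hw := D_split w k (i : ℕ) l
  have hc := hCeq l
  omega

/-- Main induction: domination of `D` implies Bruhat order. -/
lemma bruhat_of_D (w u : Equiv.Perm (Fin n)) (hyp : ∀ k l, D u k l ≤ D w k l) :
    BruhatLE u w := by
  classical
  suffices H : ∀ N, ∀ w u : Equiv.Perm (Fin n), invLen w < N →
      (∀ k l, D u k l ≤ D w k l) → BruhatLE u w from
    H (invLen w + 1) w u (Nat.lt_succ_self _) hyp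
  intro N
  induction N with
  | zero => intro w u h; omega
  | succ N ih =>
    intro w u hlt hyp
    by_cases hequ : u = w
    · subst hequ; exact Relation.ReflTransGen.refl
    · -- first differing index
      have hSne : (Finset.univ.filter (fun a : Fin n => u a ≠ w a)).Nonempty := by
        have : ∃ a, u a ≠ w a := by
          by_contra hcc
          push_neg at hcc
          exact hequ (Equiv.ext hcc)
        rcases this with ⟨a, ha⟩
        exact ⟨a, by simp [ha]⟩
      set S := Finset.univ.filter (fun a : Fin n => u a ≠ w a) with hS
      set i := S.min' hSne with hi
      have hne_i : u i ≠ w i := by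
        have := S.min'_mem hSne
        simp only [hS, Finset.mem_filter] at this
        exact this.2
      have hagree : ∀ a, a < i → u a = w a := by
        intro a ha
        by_contra hcon
        have : a ∈ S := by simp [hS, hcon]
        exact absurd (S.min'_le a this) (not_le.2 ha)
      have hui : ((u i : Fin n) : ℕ) < ((w i : Fin n) : ℕ) := first_diff u w i hagree hne_i hyp
      -- choice of j
      set T := Finset.univ.filter (fun a : Fin n =>
        i < a ∧ ((u i : Fin n) : ℕ) ≤ ((w a : Fin n) : ℕ) ∧
          ((w a : Fin n) : ℕ) < ((w i : Fin n) : ℕ)) with hT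
      have hTne : T.Nonempty := by
        refine ⟨w.symm (u i), ?_⟩
        have hwp : w (w.symm (u i)) = u i := Equiv.apply_symm_apply w (u i)
        have hpi : w.symm (u i) ≠ i := by
          intro h
          rw [h] at hwp
          exact hne_i hwp.symm
        have hip : i < w.symm (u i) := by
          rcases lt_trichotomy i (w.symm (u i)) with h | h | h
          · exact h
          · exact absurd h.symm hpi
          · exfalso
            have := hagree _ h
            rw [hwp] at this
            exact hpi (u.injective this)
        simp only [hT, Finset.mem_filter, Finset.mem_univ, true_and]
        exact ⟨hip, by rw [hwp], by rw [hwp]; exact hui⟩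
      set j := T.min' hTne with hj
      have hjmem := T.min'_mem hTne
      simp only [hT, Finset.mem_filter, Finset.mem_univ, true_and] at hjmem
      obtain ⟨hij, huiwj, hwjwi⟩ := hjmem
      have hmin : ∀ a, i < a → a < j →
          ¬(((u i : Fin n) : ℕ) ≤ ((w a : Fin n) : ℕ) ∧
            ((w a : Fin n) : ℕ) < ((w i : Fin n) : ℕ)) := by
        intro a hia haj hcon
        have : a ∈ T := by
          simp only [hT, Finset.mem_filter, Finset.mem_univ, true_and]
          exact ⟨hia, hcon⟩
        exact absurd (T.min'_le a this) (not_le.2 haj)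
      -- the swap
      set v := w * Equiv.swap i j with hv
      have hwji : w j < w i := Fin.lt_def.2 hwjwi
      have hlen : invLen v < invLen w := invLen_mul_swap_lt w i j hij hwji
      have hDv : ∀ k l, D u k l ≤ D v k l := by
        intro k l
        rcases le_or_gt k (i : ℕ) with hk | hk1
        · rw [hv, D_low w i j hij k l hk]; exact hyp k l
        rcases le_or_gt k (j : ℕ) with hk2 | hk2
        · rcases le_or_gt l ((w j : Fin n) : ℕ) with hl | hl1
          · rw [hv, D_mid_eq w i j hij (Fin.lt_def.1 hwji) k l hk1 hk2 (Or.inl hl)]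
            exact hyp k l
          rcases le_or_gt l ((w i : Fin n) : ℕ) with hl2 | hl2
          · have heq := D_mid_lt w i j hij k l hk1 hk2 hl1 hl2
            have hstrict := strict_claim u w i j hagree hij huiwj hui hmin hyp k l hk1 hk2 hl1 hl2
            rw [hv]
            omega
          · rw [hv, D_mid_eq w i j hij (Fin.lt_def.1 hwji) k l hk1 hk2 (Or.inr hl2)]
            exact hyp k l
        · rw [hv, D_high w i j hij k l hk2]; exact hyp k l
      have hstep : BruhatStep w v := ⟨i, j, ne_of_lt hij, hv, hlen⟩
      have htail : BruhatLE u v := ih v u (by omega) hDv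
      exact Relation.ReflTransGen.head hstep htail

lemma bcount_eq_D (x : Equiv.Perm (Fin n)) (k l : ℕ) (hl : 1 ≤ l) :
    bcount x k l = D x k (l - 1) := by
  unfold bcount D
  refine congrArg Finset.card (Finset.filter_congr ?_)
  intro a _
  constructor
  · rintro ⟨h1, h2⟩; exact ⟨by omega, by omega⟩
  · rintro ⟨h1, h2⟩; exact ⟨by omega, by omega⟩

end BruhatAux

open BruhatAux in
theorem bruhat_iff_bcount {n : ℕ} (w w' : Equiv.Perm (Fin n)) :
    BruhatLE w' w ↔
      ∀ k l : ℕ, 1 ≤ k → k ≤ n → 1 ≤ l → l ≤ n → bcount w' k l ≤ bcount w k l := by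
  constructor
  · intro h k l hk1 _ hl1 _
    rw [bcount_eq_D w' k l hl1, bcount_eq_D w k l hl1]
    exact D_le_of_BruhatLE h k (l - 1)
  · intro h
    apply bruhat_of_D
    intro k l
    by_cases hk0 : k = 0
    · subst hk0
      have : D w' 0 l = 0 := by
        unfold D
        rw [Finset.card_eq_zero, Finset.filter_eq_empty_iff]
        intro a _
        simp
      omega
    by_cases hl0 : l = 0
    · subst hl0
      have : D w' k 0 = D w k 0 := by
        unfold D
        refine congrArg Finset.card (Finset.filter_congr ?_)
        intro a _
        simp
      omega
    by_cases hln : n ≤ l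
    · have : D w' k l = 0 := by
        unfold D
        rw [Finset.card_eq_zero, Finset.filter_eq_empty_iff]
        intro a _
        have := (w' a).isLt
        simp only [not_and, not_le]
        intro _
        omega
      omega
    -- now 1 ≤ k, 1 ≤ l, l < n
    have hDmin : ∀ x : Equiv.Perm (Fin n), D x k l = D x (min k n) l := by
      intro x
      unfold D
      refine congrArg Finset.card (Finset.filter_congr ?_)
      intro a _
      have := a.isLt
      constructor
      · rintro ⟨h1, h2⟩; exact ⟨by omega, h2⟩
      · rintro ⟨h1, h2⟩; exact ⟨by omega, h2⟩
    rw [hDmin w', hDmin w]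
    have hmain := h (min k n) (l + 1) (by omega) (by omega) (by omega) (by omega)
    rw [bcount_eq_D w' _ _ (by omega), bcount_eq_D w _ _ (by omega)] at hmain
    simpa using hmain
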